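/- Let M' be a symmetric n × n matrix with eigendecomposition M' = Σ_{i=1}^r ν_i B_i' (B_i')^T where B_1', ..., B_r' are orthonormal, and let v be a unit vector with ‖M' v − ν_i v‖ ≤ ε for some index i. Set ν = min over i < j ≤ r of min(|ν_i − ν_j|, |ν_i|), assumed positive. Then ⟨B_i', v⟩² ≥ 1 − (ε/ν)², and consequently min(‖v − B_i'‖, ‖v + B_i'‖) ≤ √2 · ε/ν. -/

import Mathlib

/-- approximate eigenvector of a symmetric matrix with spectral gap is close to
the true eigenvector: ⟨B'_i, v⟩² ≥ 1 − (ε/ν)², hence min(‖v−B'_i‖,‖v+B'_i‖) ≤ √2 ε/ν. -/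
theorem stmt7 {n r : ℕ} (ε νmin : ℝ) (hνmin : 0 < νmin)
    (ν : Fin r → ℝ) (B' : Fin r → EuclideanSpace ℝ (Fin n)) (hB' : Orthonormal ℝ B')
    (M' : Matrix (Fin n) (Fin n) ℝ)
    (hM' : ∀ a b, M' a b = ∑ i, ν i * B' i a * B' i b)
    (v : EuclideanSpace ℝ (Fin n)) (hv : ‖v‖ = 1) (i : Fin r)
    (hgap : ∀ j k : Fin r, j ≠ k → νmin ≤ |ν j - ν k|) (habs : ∀ j, νmin ≤ |ν j|)
    (w : EuclideanSpace ℝ (Fin n))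
    (hw : ∀ a, w a = (∑ x, M' a x * v x) - ν i * v a)
    (hε : ‖w‖ ≤ ε) :
    1 - (ε / νmin) ^ 2 ≤ (inner ℝ (B' i) v : ℝ) ^ 2 ∧
    min ‖v - B' i‖ ‖v + B' i‖ ≤ Real.sqrt 2 * ε / νmin := by
  classical
  set c : Fin r → ℝ := fun j => inner ℝ (B' j) v with hc
  set p : EuclideanSpace ℝ (Fin n) := ∑ j, c j • B' j with hp
  set q : EuclideanSpace ℝ (Fin n) := v - p with hq
  have hcj : ∀ j, c j = ∑ a, B' j a * v a := by
    intro j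
    simp [hc, PiLp.inner_apply, RCLike.inner_apply, mul_comm]
  have hBq : ∀ j, (inner ℝ (B' j) q : ℝ) = 0 := by
    intro j
    rw [hq, inner_sub_right, hp, hB'.inner_right_fintype]
    simp [hc]
  -- w as a vector identity
  have hwvec : w = (∑ j, (ν j * c j) • B' j) - ν i • v := by
    ext a
    rw [hw a]
    have h0 : (∑ x, M' a x * v x) = ∑ j, ν j * c j * B' j a := by
      simp only [hM', Finset.sum_mul]
      rw [Finset.sum_comm]
      refine Finset.sum_congr rfl fun j _ => ?_
      rw [hcj j, Finset.mul_sum, Finset.sum_mul]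
      exact Finset.sum_congr rfl fun x _ => by ring
    rw [h0]
    show _ = (∑ x : Fin r, (ν x * c x) • B' x) a - ν i * v a
    rw [WithLp.ofLp_sum, Finset.sum_apply]
    rfl
  have hsum : ∑ j, ((ν j - ν i) * c j) • B' j + ∑ j, ν i • (c j • B' j)
      = ∑ j, (ν j * c j) • B' j := by
    rw [← Finset.sum_add_distrib]
    refine Finset.sum_congr rfl fun j _ => ?_
    rw [smul_smul, ← add_smul]
    ring_nf
  have hwvec2 : w = (∑ j, ((ν j - ν i) * c j) • B' j) - ν i • q := by
    rw [hwvec, hq, hp, smul_sub, Finset.smul_sum, ← hsum]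
    abel
  set s : EuclideanSpace ℝ (Fin n) := ∑ j, ((ν j - ν i) * c j) • B' j with hs
  have hsq : (inner ℝ s q : ℝ) = 0 := by
    rw [hs, sum_inner]
    simp [inner_smul_left, hBq]
  have hnorms : ‖s‖ ^ 2 = ∑ j, ((ν j - ν i) * c j) ^ 2 := by
    rw [← real_inner_self_eq_norm_sq, hs, hB'.inner_sum]
    simp [sq]
  have hnormw : ‖w‖ ^ 2 = ∑ j, ((ν j - ν i) * c j) ^ 2 + ν i ^ 2 * ‖q‖ ^ 2 := by
    rw [hwvec2, norm_sub_sq_real, inner_smul_right, hsq, hnorms, norm_smul]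
    simp only [Real.norm_eq_abs, mul_pow, sq_abs]
    ring
  -- Bessel
  have hpq : (inner ℝ p q : ℝ) = 0 := by
    rw [hp, sum_inner]
    simp [inner_smul_left, hBq]
  have hnormp : ‖p‖ ^ 2 = ∑ j, c j ^ 2 := by
    rw [← real_inner_self_eq_norm_sq, hp, hB'.inner_sum]
    simp [sq]
  have hvpq : v = p + q := by rw [hq]; abel
  have hbessel : (1:ℝ) = ∑ j, c j ^ 2 + ‖q‖ ^ 2 := by
    calc (1:ℝ) = ‖v‖ ^ 2 := by rw [hv]; norm_num
    _ = ‖p‖^2 + 2 * inner ℝ p q + ‖q‖^2 := by rw [hvpq, norm_add_sq_real]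
    _ = ∑ j, c j ^ 2 + ‖q‖ ^ 2 := by rw [hpq, hnormp]; ring
  -- key inequality
  have hkey : νmin ^ 2 * (1 - c i ^ 2) ≤ ‖w‖ ^ 2 := by
    have h1 : ∑ j, ((ν j - ν i) * c j) ^ 2
        = ∑ j ∈ Finset.univ.erase i, ((ν j - ν i) * c j) ^ 2 := by
      rw [Finset.sum_erase]
      simp
    have h2 : ∑ j ∈ Finset.univ.erase i, νmin ^ 2 * c j ^ 2
        ≤ ∑ j ∈ Finset.univ.erase i, ((ν j - ν i) * c j) ^ 2 := by
      refine Finset.sum_le_sum fun j hj => ?_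
      have hji : j ≠ i := Finset.ne_of_mem_erase hj
      have h3 : νmin ^ 2 ≤ (ν j - ν i) ^ 2 := by
        calc νmin ^ 2 ≤ |ν j - ν i| ^ 2 := pow_le_pow_left₀ hνmin.le (hgap j i hji) 2
          _ = (ν j - ν i) ^ 2 := sq_abs _
      rw [mul_pow]
      exact mul_le_mul_of_nonneg_right h3 (sq_nonneg _)
    have h4 : ∑ j ∈ Finset.univ.erase i, νmin ^ 2 * c j ^ 2
        = νmin ^ 2 * (∑ j, c j ^ 2 - c i ^ 2) := by
      rw [← Finset.mul_sum, Finset.sum_erase_eq_sub (Finset.mem_univ i)]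
    have h5 : νmin ^ 2 * ‖q‖ ^ 2 ≤ ν i ^ 2 * ‖q‖ ^ 2 := by
      have h6 : νmin ^ 2 ≤ ν i ^ 2 := by
        calc νmin ^ 2 ≤ |ν i| ^ 2 := pow_le_pow_left₀ hνmin.le (habs i) 2
          _ = ν i ^ 2 := sq_abs _
      exact mul_le_mul_of_nonneg_right h6 (sq_nonneg _)
    have h7 : 1 - c i ^ 2 = (∑ j, c j ^ 2 - c i ^ 2) + ‖q‖ ^ 2 := by
      rw [hbessel]; ring
    rw [hnormw, h7, h1, mul_add, ← h4]
    linarith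
  have hεnn : 0 ≤ ε := le_trans (norm_nonneg w) hε
  have hw2 : ‖w‖ ^ 2 ≤ ε ^ 2 := pow_le_pow_left₀ (norm_nonneg w) hε 2
  have hν2 : (0:ℝ) < νmin ^ 2 := by positivity
  have hkey2 : νmin ^ 2 * (1 - c i ^ 2) ≤ ε ^ 2 := le_trans hkey hw2
  have h8 : 1 - c i ^ 2 ≤ ε ^ 2 / νmin ^ 2 := by
    rw [le_div_iff₀ hν2]
    linarith
  have hfirst : 1 - (ε / νmin) ^ 2 ≤ c i ^ 2 := by
    rw [div_pow]
    linarith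
  refine ⟨hfirst, ?_⟩
  have hci1 : |c i| ≤ 1 := by
    calc |c i| ≤ ‖B' i‖ * ‖v‖ := abs_real_inner_le_norm _ _
    _ = 1 := by rw [hB'.1 i, hv, mul_one]
  obtain ⟨hcil, hciu⟩ := abs_le.mp hci1
  have htgt : 0 ≤ Real.sqrt 2 * ε / νmin := by positivity
  have hsq2 : Real.sqrt 2 ^ 2 = 2 := Real.sq_sqrt (by norm_num)
  have h9 : (Real.sqrt 2 * ε / νmin) ^ 2 = 2 * (ε ^ 2 / νmin ^ 2) := by
    rw [div_pow, mul_pow, hsq2]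
    ring
  rcases le_or_gt 0 (c i) with hpos | hneg
  · have hci2 : c i ^ 2 ≤ c i := by
      calc c i ^ 2 = c i * c i := sq (c i) ▸ rfl
      _ ≤ 1 * c i := mul_le_mul_of_nonneg_right hciu hpos
      _ = c i := one_mul _
    have hnsub : ‖v - B' i‖ ^ 2 ≤ (Real.sqrt 2 * ε / νmin) ^ 2 := by
      rw [norm_sub_sq_real, hv, hB'.1 i, real_inner_comm, h9]
      show 1 ^ 2 - 2 * c i + 1 ^ 2 ≤ _
      have : (1:ℝ)^2 = 1 := one_pow 2
      linarith
    calc min ‖v - B' i‖ ‖v + B' i‖ ≤ ‖v - B' i‖ := min_le_left _ _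
    _ ≤ Real.sqrt 2 * ε / νmin := by
        have := Real.sqrt_le_sqrt hnsub
        rwa [Real.sqrt_sq (norm_nonneg _), Real.sqrt_sq htgt] at this
  · have hci2 : c i ^ 2 ≤ -c i := by
      have h10 : -c i ≤ 1 := by linarith
      have h11 : 0 ≤ -c i := by linarith
      calc c i ^ 2 = -c i * -c i := by ring
      _ ≤ 1 * -c i := mul_le_mul_of_nonneg_right h10 h11
      _ = -c i := one_mul _
    have hnadd : ‖v + B' i‖ ^ 2 ≤ (Real.sqrt 2 * ε / νmin) ^ 2 := by
      rw [norm_add_sq_real, hv, hB'.1 i, real_inner_comm, h9]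
      show 1 ^ 2 + 2 * c i + 1 ^ 2 ≤ _
      have : (1:ℝ)^2 = 1 := one_pow 2
      linarith
    calc min ‖v - B' i‖ ‖v + B' i‖ ≤ ‖v + B' i‖ := min_le_right _ _
    _ ≤ Real.sqrt 2 * ε / νmin := by
        have := Real.sqrt_le_sqrt hnadd
        rwa [Real.sqrt_sq (norm_nonneg _), Real.sqrt_sq htgt] at this
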